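/- The set of affected sources of v admits the explicit characterization S(v) = {s ∈ V : d(s,u) < ∞ and d(s,u) + ω'(u,v) ≤ d(s,v)}. -/

import Mathlib

open scoped BigOperators

/-- A directed graph on vertex set `V` with positive real edge weights. -/
structure WDigraph (V : Type*) where
  /-- the edge relation -/
  E : V → V → Prop
  /-- the edge weights -/
  w : V → V → ℝ
  /-- weights of edges are positive -/
  pos : ∀ a b, E a b → 0 < w a b

namespace WDigraph

variable {V : Type*} [Fintype V] [DecidableEq V]

/-- `p` is a simple path from `s` to `t` in `G`: a nonempty list of pairwise
distinct vertices starting at `s`, ending at `t`, consecutive vertices joined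
by edges. (Since all weights are positive, every shortest path is simple, so
it suffices to consider simple paths throughout.) -/
def IsPath (G : WDigraph V) (s t : V) (p : List V) : Prop :=
  List.Chain' G.E p ∧ p.head? = some s ∧ p.getLast? = some t ∧ p.Nodup

/-- The total weight of a list of vertices (sum of the weights of consecutive pairs). -/
def pw (G : WDigraph V) : List V → ℝ
  | [] => 0
  | [_] => 0
  | a :: b :: r => G.w a b + G.pw (b :: r)

/-- `d(s,t)`: shortest-path distance from `s` to `t`, equal to `⊤` (infinity)
if `t` is unreachable from `s`. -/
noncomputable def dist (G : WDigraph V) (s t : V) : EReal :=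
  sInf ((fun p => (G.pw p : EReal)) '' {p | G.IsPath s t p})

/-- The set of shortest `s`-`t` paths in `G`. -/
def SP (G : WDigraph V) (s t : V) : Set (List V) :=
  {p | G.IsPath s t p ∧ (G.pw p : EReal) = G.dist s t}

/-- `σ_{st}`: the number of shortest `s`-`t` paths in `G`. -/
noncomputable def sigma (G : WDigraph V) (s t : V) : ℕ :=
  (G.SP s t).ncard

/-- `σ_{st}(v)`: the number of shortest `s`-`t` paths in `G` that contain `v`. -/
noncomputable def sigmaV (G : WDigraph V) (s t v : V) : ℕ :=
  {p ∈ G.SP s t | v ∈ p}.ncard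

/-- `σ_{st}(v,w)`: the number of shortest `s`-`t` paths in `G` using the edge `(v,w)`. -/
noncomputable def sigmaE (G : WDigraph V) (s t v w : V) : ℕ :=
  {p ∈ G.SP s t | [v, w] <:+: p}.ncard

/-- `P_s(t)`: the set of predecessors of `t` with respect to source `s`:
nodes `y` with `(y,t) ∈ E` and `d(s,y) + ω(y,t) = d(s,t) < ∞`. -/
def pred (G : WDigraph V) (s t : V) : Set V :=
  {y | G.E y t ∧ G.dist s y + (G.w y t : EReal) = G.dist s t ∧ G.dist s t < ⊤}

/-- `δ_{s•}(v)`: Brandes's one-sided dependency of `s` on `v`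
(a summand is `0` whenever its denominator is `0`, which is automatic since
in Lean division by zero yields zero). -/
noncomputable def delta (G : WDigraph V) (s v : V) : ℝ :=
  ∑ᶠ t ∈ {t : V | t ≠ s ∧ t ≠ v}, (G.sigmaV s t v : ℝ) / (G.sigma s t : ℝ)

/-- `c_B(v)`: the betweenness centrality of `v`. -/
noncomputable def bc (G : WDigraph V) (v : V) : ℝ :=
  ∑ᶠ s ∈ {s : V | s ≠ v}, G.delta s v

/-- `G'` is obtained from `G` by the incremental update `(u, v, ω'(u,v))`:
either a new edge `(u,v) ∉ E` is inserted with positive weight, or the weight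
of the existing edge `(u,v)` is decreased; all other edges and weights are
unchanged. (Positivity of all weights is part of the `WDigraph` structure.) -/
structure IsUpdate (G G' : WDigraph V) (u v : V) : Prop where
  /-- the updated edge is present in `G'` -/
  edge' : G'.E u v
  /-- `E' = E ∪ {(u,v)}` -/
  edge_iff : ∀ a b, G'.E a b ↔ G.E a b ∨ a = u ∧ b = v
  /-- `ω'` agrees with `ω` on all edges other than `(u,v)` -/
  weight_eq : ∀ a b, ¬(a = u ∧ b = v) → G'.w a b = G.w a b
  /-- either an insertion of a new edge, or a weight decrease of an existing one -/
  insert_or_decrease : ¬ G.E u v ∨ (G.E u v ∧ G'.w u v < G.w u v)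

/-- `S(t)`: the affected sources of `t`. -/
def affS (G G' : WDigraph V) (t : V) : Set V :=
  {s | G.dist s t > G'.dist s t ∨ G.sigma s t ≠ G'.sigma s t}

/-- `T(s)`: the affected targets of `s`. -/
def affT (G G' : WDigraph V) (s : V) : Set V :=
  {t | G.dist s t > G'.dist s t ∨ G.sigma s t ≠ G'.sigma s t}

/-- `Δ_{s•}(v) = Σ_{t ∈ T(s), t ≠ v} σ_{st}(v)/σ_{st}`, computed in `G`
(`0`-convention for zero denominators). -/
noncomputable def Delta (G G' : WDigraph V) (s v : V) : ℝ :=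
  ∑ᶠ t ∈ {t : V | t ∈ affT G G' s ∧ t ≠ v}, (G.sigmaV s t v : ℝ) / (G.sigma s t : ℝ)

/-- `Δ'_{s•}(v) = Σ_{t ∈ T(s), t ≠ v} σ'_{st}(v)/σ'_{st}`, computed in `G'`
(`0`-convention for zero denominators). -/
noncomputable def Delta' (G G' : WDigraph V) (s v : V) : ℝ :=
  ∑ᶠ t ∈ {t : V | t ∈ affT G G' s ∧ t ≠ v}, (G'.sigmaV s t v : ℝ) / (G'.sigma s t : ℝ)

-- AUX START
set_option linter.unusedSectionVars false

lemma pw_cons_cons (G : WDigraph V) (a b : V) (r : List V) :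
    G.pw (a :: b :: r) = G.w a b + G.pw (b :: r) := rfl

lemma pw_nonneg (G : WDigraph V) : ∀ {p : List V}, List.Chain' G.E p → 0 ≤ G.pw p
  | [], _ => le_refl 0
  | [_], _ => le_refl 0
  | a :: b :: r, hc => by
      rw [List.Chain', List.isChain_cons_cons] at hc
      have h1 := G.pos a b hc.1
      have h2 := pw_nonneg G hc.2
      rw [pw_cons_cons]; linarith

lemma pw_append_singleton (G : WDigraph V) :
    ∀ (q : List V) (a x : V), q.getLast? = some a → G.pw (q ++ [x]) = G.pw q + G.w a x
  | [], a, x, h => by simp at h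
  | [b], a, x, h => by
      simp only [List.getLast?_singleton, Option.some.injEq] at h
      subst h; simp [pw]
  | b :: c :: r, a, x, h => by
      rw [List.getLast?_cons_cons] at h
      have ih := pw_append_singleton G (c :: r) a x h
      simp only [List.cons_append] at *
      rw [pw_cons_cons, ih, pw_cons_cons]; ring

lemma pw_le_pw_append (G : WDigraph V) :
    ∀ (q r : List V), q ≠ [] → List.Chain' G.E (q ++ r) → G.pw q ≤ G.pw (q ++ r)
  | [], _, hq, _ => absurd rfl hq
  | [a], r, _, hc => by
      have h0 : G.pw [a] = 0 := rfl
      rw [h0]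
      exact G.pw_nonneg hc
  | a :: b :: t, r, _, hc => by
      rw [List.cons_append, List.cons_append, List.Chain', List.isChain_cons_cons] at hc
      have ih := pw_le_pw_append G (b :: t) r (by simp) (by
        rw [List.cons_append]; exact hc.2)
      simp only [List.cons_append, pw_cons_cons] at *
      linarith

lemma finite_isPath (G : WDigraph V) (s t : V) : {p : List V | G.IsPath s t p}.Finite := by
  refine Set.Finite.subset ((List.finite_length_le V (Fintype.card V))) ?_
  intro p hp
  exact hp.2.2.2.length_le_card

lemma dist_le_pw (G : WDigraph V) {s t : V} {p : List V} (hp : G.IsPath s t p) :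
    G.dist s t ≤ (G.pw p : EReal) :=
  sInf_le ⟨p, hp, rfl⟩

lemma exists_shortest (G : WDigraph V) {s t : V} (h : G.dist s t < ⊤) :
    ∃ p, G.IsPath s t p ∧ (G.pw p : EReal) = G.dist s t := by
  have hfin : ((fun p => (G.pw p : EReal)) '' {p | G.IsPath s t p}).Finite :=
    (G.finite_isPath s t).image _
  have hne : ((fun p => (G.pw p : EReal)) '' {p | G.IsPath s t p}).Nonempty := by
    by_contra he
    rw [Set.not_nonempty_iff_eq_empty] at he
    rw [dist, he, sInf_empty] at h
    exact lt_irrefl _ h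
  obtain ⟨p, hp, hpe⟩ := hne.csInf_mem hfin
  exact ⟨p, hp, hpe⟩

lemma getLast?_append_right {l l' : List V} (h : l' ≠ []) :
    (l ++ l').getLast? = l'.getLast? := by
  rw [List.getLast?_append]
  cases hx : l'.getLast? with
  | none => exact absurd (List.getLast?_eq_none_iff.mp hx) h
  | some a => rfl

lemma not_infix_pair_of_getLast {p : List V} {a : V} (hn : p.Nodup)
    (hl : p.getLast? = some a) (b : V) : ¬ [a, b] <:+: p := by
  rintro ⟨s₁, s₂, rfl⟩
  have hsub : (a :: b :: s₂).Nodup := by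
    have hs : (a :: b :: s₂) <:+ s₁ ++ [a, b] ++ s₂ := ⟨s₁, by simp⟩
    exact hn.sublist hs.sublist
  have hne : (b :: s₂ : List V) ≠ [] := by simp
  have hlast : (s₁ ++ [a, b] ++ s₂).getLast? = (b :: s₂).getLast? := by
    rw [List.append_assoc, getLast?_append_right (by simp)]
    simp only [List.cons_append, List.nil_append, List.getLast?_cons_cons]
  rw [hlast, List.getLast?_eq_getLast hne] at hl
  have ha : (b :: s₂).getLast hne = a := Option.some.inj hl
  exact (List.nodup_cons.mp hsub).1 (ha ▸ List.getLast_mem hne)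

section Update

variable {G G' : WDigraph V} {u v : V}

lemma infix_pair_head (a b : V) (r : List V) : [a, b] <:+: a :: b :: r :=
  ⟨[], r, rfl⟩

lemma infix_pair_tail {a b x : V} {r : List V} (h : [a, b] <:+: r) : [a, b] <:+: x :: r :=
  h.trans (List.suffix_cons x r).isInfix

lemma head?_append_left {l l' : List V} (h : l ≠ []) : (l ++ l').head? = l.head? := by
  rw [List.head?_append]
  cases hx : l.head? with
  | none => exact absurd (List.head?_eq_none_iff.mp hx) h
  | some a => rfl

lemma chain'_update (h : IsUpdate G G' u v) {p : List V} (hp : List.Chain' G.E p) :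
    List.Chain' G'.E p :=
  hp.imp fun a b hab => (h.edge_iff a b).mpr (Or.inl hab)

lemma chain'_transfer (h : IsUpdate G G' u v) :
    ∀ {p : List V}, List.Chain' G'.E p → ¬ [u, v] <:+: p → List.Chain' G.E p
  | [], _, _ => List.isChain_nil
  | [a], _, _ => List.isChain_singleton a
  | a :: b :: r, hc, hn => by
      rw [List.Chain', List.isChain_cons_cons] at hc ⊢
      refine ⟨?_, chain'_transfer h hc.2 (fun hi => hn (infix_pair_tail hi))⟩
      rcases (h.edge_iff a b).mp hc.1 with h1 | h1
      · exact h1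
      · exact absurd (h1.1 ▸ h1.2 ▸ infix_pair_head a b r) hn

lemma pw_transfer (h : IsUpdate G G' u v) :
    ∀ {p : List V}, ¬ [u, v] <:+: p → G'.pw p = G.pw p
  | [], _ => rfl
  | [_], _ => rfl
  | a :: b :: r, hn => by
      have hw : G'.w a b = G.w a b := by
        refine h.weight_eq a b fun hab => hn ?_
        exact hab.1 ▸ hab.2 ▸ infix_pair_head a b r
      rw [pw_cons_cons, pw_cons_cons, hw,
        pw_transfer h (fun hi => hn (infix_pair_tail hi))]

lemma pw'_le_pw (h : IsUpdate G G' u v) :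
    ∀ {p : List V}, List.Chain' G.E p → G'.pw p ≤ G.pw p
  | [], _ => le_refl 0
  | [_], _ => le_refl 0
  | a :: b :: r, hc => by
      rw [List.Chain', List.isChain_cons_cons] at hc
      have ih := pw'_le_pw h hc.2
      have hw : G'.w a b ≤ G.w a b := by
        by_cases hab : a = u ∧ b = v
        · obtain ⟨rfl, rfl⟩ := hab
          rcases h.insert_or_decrease with h1 | h1
          · exact absurd hc.1 h1
          · exact le_of_lt h1.2
        · exact le_of_eq (h.weight_eq a b hab)
      rw [pw_cons_cons, pw_cons_cons]; linarith

lemma isPath_update (h : IsUpdate G G' u v) {s t : V} {p : List V}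
    (hp : G.IsPath s t p) : G'.IsPath s t p :=
  ⟨chain'_update h hp.1, hp.2⟩

lemma dist'_le_dist (h : IsUpdate G G' u v) (s t : V) : G'.dist s t ≤ G.dist s t := by
  apply le_sInf
  rintro x ⟨p, hp, rfl⟩
  calc G'.dist s t ≤ (G'.pw p : EReal) := dist_le_pw G' (isPath_update h hp)
    _ ≤ (G.pw p : EReal) := EReal.coe_le_coe_iff.mpr (pw'_le_pw h hp.1)

/-- Decomposition of a `G'`-path ending at `v` that uses the edge `(u,v)`. -/
lemma decompose (h : IsUpdate G G' u v) {s : V} {p : List V}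
    (hp : G'.IsPath s v p) (hi : [u, v] <:+: p) :
    ∃ q, p = q ++ [v] ∧ q.getLast? = some u ∧ G.IsPath s u q ∧
      G'.pw p = G.pw q + G'.w u v := by
  obtain ⟨s₁, s₂, rfl⟩ := hi
  obtain ⟨hc, hh, hl, hn⟩ := hp
  -- first show s₂ = []
  have hs₂ : s₂ = [] := by
    by_contra hne
    have hlast : (s₁ ++ [u, v] ++ s₂).getLast? = s₂.getLast? :=
      getLast?_append_right hne
    rw [hlast, List.getLast?_eq_getLast hne] at hl
    have hv : v ∈ s₂ := (Option.some.inj hl) ▸ List.getLast_mem hne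
    have hsubnd : (u :: v :: s₂).Nodup := by
      have hs : (u :: v :: s₂) <:+ s₁ ++ [u, v] ++ s₂ := ⟨s₁, by simp⟩
      exact hn.sublist hs.sublist
    exact ((List.nodup_cons.mp (List.nodup_cons.mp hsubnd).2).1) hv
  subst hs₂
  refine ⟨s₁ ++ [u], by simp, by simp, ?_, ?_⟩
  · -- G.IsPath s u (s₁ ++ [u])
    have hpre : (s₁ ++ [u]) <+: s₁ ++ [u, v] ++ [] := ⟨[v], by simp⟩
    have hnd : (s₁ ++ [u]).Nodup := hn.sublist hpre.sublist
    have hgl : (s₁ ++ [u]).getLast? = some u := List.getLast?_concat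
    have hni : ¬ [u, v] <:+: (s₁ ++ [u]) := not_infix_pair_of_getLast hnd hgl v
    have hc' : List.Chain' G'.E (s₁ ++ [u]) := hc.infix hpre.isInfix
    refine ⟨chain'_transfer h hc' hni, ?_, hgl, hnd⟩
    -- head
    rw [← hh]
    have h1 : s₁ ++ [u, v] ++ [] = (s₁ ++ [u]) ++ [v] := by simp
    rw [h1]
    exact (head?_append_left (by simp)).symm
  · -- weight
    have h1 : s₁ ++ [u, v] ++ [] = (s₁ ++ [u]) ++ [v] := by simp
    have hgl : (s₁ ++ [u]).getLast? = some u := List.getLast?_concat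
    have hnd : (s₁ ++ [u]).Nodup := by
      have hpre : (s₁ ++ [u]) <+: s₁ ++ [u, v] ++ [] := ⟨[v], by simp⟩
      exact hn.sublist hpre.sublist
    rw [h1, pw_append_singleton G' _ u v hgl,
      pw_transfer h (not_infix_pair_of_getLast hnd hgl v)]

lemma key (h : IsUpdate G G' u v) {s : V} {p : List V}
    (hp : G'.IsPath s v p) (hi : [u, v] <:+: p) :
    G.dist s u < ⊤ ∧ G.dist s u + (G'.w u v : EReal) ≤ (G'.pw p : EReal) := by
  obtain ⟨q, rfl, hgl, hq, hpw⟩ := decompose h hp hi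
  have hdq : G.dist s u ≤ (G.pw q : EReal) := dist_le_pw G hq
  constructor
  · exact lt_of_le_of_lt hdq (EReal.coe_lt_top _)
  · calc G.dist s u + (G'.w u v : EReal)
        ≤ (G.pw q : EReal) + (G'.w u v : EReal) := add_le_add_left hdq _
      _ = ((G.pw q + G'.w u v : ℝ) : EReal) := (EReal.coe_add _ _).symm
      _ = (G'.pw (q ++ [v]) : EReal) := by rw [hpw]

lemma finite_SP (G : WDigraph V) (s t : V) : (G.SP s t).Finite :=
  (G.finite_isPath s t).subset fun p hp => hp.1

lemma SP_subset (h : IsUpdate G G' u v) {s t : V} (heq : G'.dist s t = G.dist s t) :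
    G.SP s t ⊆ G'.SP s t := by
  rintro p ⟨hp, hpe⟩
  have hp' : G'.IsPath s t p := isPath_update h hp
  have h1 : G'.dist s t ≤ (G'.pw p : EReal) := dist_le_pw G' hp'
  have h2 : (G'.pw p : EReal) ≤ (G.pw p : EReal) := EReal.coe_le_coe_iff.mpr (pw'_le_pw h hp.1)
  exact ⟨hp', le_antisymm (h2.trans_eq (hpe.trans heq.symm)) h1⟩

end Update


/-- The set of affected sources of `v` has the explicit
characterization `S(v) = {s ∈ V : d(s,u) < ∞ ∧ d(s,u) + ω'(u,v) ≤ d(s,v)}`. -/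
theorem affS_v_eq (G G' : WDigraph V) (u v : V) (h : IsUpdate G G' u v) :
    affS G G' v =
      {s : V | G.dist s u < ⊤ ∧ G.dist s u + (G'.w u v : EReal) ≤ G.dist s v} := by
  ext s
  simp only [affS, Set.mem_setOf_eq, gt_iff_lt]
  have hdle := dist'_le_dist h s v
  constructor
  · -- forward direction
    have main_lt : G'.dist s v < G.dist s v →
        G.dist s u < ⊤ ∧ G.dist s u + (G'.w u v : EReal) ≤ G.dist s v := by
      intro hd
      obtain ⟨p, hp, hpe⟩ := exists_shortest G' (lt_of_lt_of_le hd le_top)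
      have hi : [u, v] <:+: p := by
        by_contra hni
        have hcp : G.IsPath s v p := ⟨chain'_transfer h hp.1 hni, hp.2⟩
        have h1 := dist_le_pw G hcp
        rw [← pw_transfer h hni, hpe] at h1
        exact absurd hd (not_lt.mpr h1)
      obtain ⟨hfin, hle⟩ := key h hp hi
      exact ⟨hfin, by rw [hpe] at hle; exact hle.trans hd.le⟩
    rintro (hd | hs)
    · exact main_lt hd
    · rcases lt_or_eq_of_le hdle with hlt | heq
      · exact main_lt hlt
      · have hsub := SP_subset h heq
        obtain ⟨p, hp', hpn⟩ : ∃ p, p ∈ G'.SP s v ∧ p ∉ G.SP s v := by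
          by_contra hc
          push_neg at hc
          exact hs (by rw [sigma, sigma, hsub.antisymm hc])
        have hi : [u, v] <:+: p := by
          by_contra hni
          exact hpn ⟨⟨chain'_transfer h hp'.1.1 hni, hp'.1.2⟩,
            by rw [← pw_transfer h hni, hp'.2, heq]⟩
        obtain ⟨hfin, hle⟩ := key h hp'.1 hi
        rw [hp'.2, heq] at hle
        exact ⟨hfin, hle⟩
  · -- reverse direction
    rintro ⟨hfin, hle⟩
    obtain ⟨p, hp, hpe⟩ := exists_shortest G hfin
    have hω := G'.pos u v h.edge'
    have hv : v ∉ p := by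
      intro hv
      obtain ⟨p₁, p₂, rfl⟩ := List.append_of_mem hv
      have hassoc : p₁ ++ v :: p₂ = (p₁ ++ [v]) ++ p₂ := by simp
      have hinf : (p₁ ++ [v]) <:+: (p₁ ++ v :: p₂) := ⟨[], p₂, by simp⟩
      have hsl : List.Sublist (p₁ ++ [v]) (p₁ ++ v :: p₂) := hinf.sublist
      have hq : G.IsPath s v (p₁ ++ [v]) := by
        refine ⟨hp.1.infix hinf, ?_, List.getLast?_concat,
          hp.2.2.2.sublist hsl⟩
        rw [← hp.2.1, hassoc]
        exact (head?_append_left (l := p₁ ++ [v]) (by simp)).symm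
      have h1 : G.dist s v ≤ ((G.pw (p₁ ++ [v]) : ℝ) : EReal) := dist_le_pw G hq
      have h2 : G.pw (p₁ ++ [v]) ≤ G.pw (p₁ ++ v :: p₂) := by
        rw [hassoc]
        exact pw_le_pw_append G (p₁ ++ [v]) p₂ (by simp) (hassoc ▸ hp.1)
      have h3 : G.dist s u + (G'.w u v : EReal) ≤ G.dist s u := by
        calc G.dist s u + (G'.w u v : EReal) ≤ G.dist s v := hle
          _ ≤ ((G.pw (p₁ ++ [v]) : ℝ) : EReal) := h1
          _ ≤ ((G.pw (p₁ ++ v :: p₂) : ℝ) : EReal) := EReal.coe_le_coe_iff.mpr h2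
          _ = G.dist s u := hpe
      rw [← hpe, ← EReal.coe_add, EReal.coe_le_coe_iff] at h3
      linarith
    have hni : ¬ [u, v] <:+: p := fun hi => hv (hi.sublist.mem (by simp))
    have hplast : p.getLast? = some u := hp.2.2.1
    have hpne : p ≠ [] := by rintro rfl; simp at hplast
    have hpath' : G'.IsPath s v (p ++ [v]) := by
      refine ⟨?_, ?_, List.getLast?_concat, ?_⟩
      · rw [List.Chain', List.isChain_append]
        refine ⟨chain'_update h hp.1, List.isChain_singleton v, ?_⟩
        intro x hx y hy
        simp only [hplast, Option.mem_some_iff] at hx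
        simp only [List.head?_cons, Option.mem_some_iff] at hy
        subst hx; subst hy
        exact h.edge'
      · rw [← hp.2.1]
        exact head?_append_left hpne
      · rw [List.nodup_append]
        exact ⟨hp.2.2.2, List.nodup_singleton v,
          fun a ha b hb hab => hv (by rw [← List.mem_singleton.mp hb, ← hab]; exact ha)⟩
    have hpw : G'.pw (p ++ [v]) = G.pw p + G'.w u v := by
      rw [pw_append_singleton G' p u v hplast, pw_transfer h hni]
    have hd'le : G'.dist s v ≤ ((G.pw p + G'.w u v : ℝ) : EReal) := by
      rw [← hpw]
      exact dist_le_pw G' hpath'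
    rcases lt_or_eq_of_le hdle with hlt | heq
    · exact Or.inl hlt
    · right
      have hval : G.dist s v = ((G.pw p + G'.w u v : ℝ) : EReal) := by
        refine le_antisymm (heq ▸ hd'le) ?_
        rw [EReal.coe_add, hpe]
        exact hle
      have hmem' : (p ++ [v]) ∈ G'.SP s v := by
        refine ⟨hpath', ?_⟩
        rw [hpw, heq]
        exact hval.symm
      have hnmem : (p ++ [v]) ∉ G.SP s v := by
        rintro ⟨hq, hqe⟩
        have hpwG : G.pw (p ++ [v]) = G.pw p + G.w u v := pw_append_singleton G p u v hplast
        have hEuv : G.E u v := by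
          have hc := List.isChain_append.mp hq.1
          exact hc.2.2 u (by rw [hplast]; rfl) v rfl
        have hweq : G.w u v = G'.w u v := by
          have h4 := hqe.trans hval
          rw [hpwG, EReal.coe_eq_coe_iff] at h4
          linarith
        rcases h.insert_or_decrease with h5 | h5
        · exact h5 hEuv
        · rw [hweq] at h5
          exact lt_irrefl _ h5.2
      have hss : G.SP s v ⊂ G'.SP s v :=
        ⟨SP_subset h heq, fun hsub2 => hnmem (hsub2 hmem')⟩
      exact ne_of_lt (Set.ncard_lt_ncard hss (finite_SP G' s v))


end WDigraph
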